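/- Let E and F be complex Hilbert spaces and let B, A : E →L[ℂ] F be continuous linear maps such that A vanishes on the orthogonal complement of ker B (i.e. A x = 0 for all x ∈ (ker B)ᗮ) and range A ⊆ range B. Then for every scalar t ∈ ℂ, range (B + t • A) = range B, and ker (B + t • A) is ℂ-linearly isomorphic to ker B; in particular, if ker B has finite dimension κ and F ⧸ range B has finite dimension, then every B + t • A has closed range with the same cokernel, kernel of dimension κ, and the same Fredholm index as B. -/

import Mathlib

open Module

/-- **Claim in the proof of Lemma 4.7.** Let `B, A : E →L F` be bounded operators
between complex Hilbert spaces such that `A` vanishes on `(ker B)ᗮ` and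
`range A ⊆ range B`.  Then for every `t : ℂ`, `range (B + t • A) = range B` and
`ker (B + t • A) ≅ ker B`; in particular, if `dim ker B = κ < ∞` and the cokernel of
`B` is finite-dimensional, then each `B + t • A` has closed range, the same cokernel,
kernel of dimension `κ`, and the same Fredholm index as `B`. -/
theorem range_and_kernel_of_perturbation_by_kernel_to_range_operator
    {E F : Type*}
    [NormedAddCommGroup E] [InnerProductSpace ℂ E] [CompleteSpace E]
    [NormedAddCommGroup F] [InnerProductSpace ℂ F] [CompleteSpace F]
    (B A : E →L[ℂ] F)
    (hA0 : ∀ x ∈ (LinearMap.ker (B : E →ₗ[ℂ] F))ᗮ, A x = 0)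
    (hAB : LinearMap.range (A : E →ₗ[ℂ] F) ≤ LinearMap.range (B : E →ₗ[ℂ] F)) :
    ∀ t : ℂ,
      LinearMap.range ((B + t • A : E →L[ℂ] F) : E →ₗ[ℂ] F) = LinearMap.range (B : E →ₗ[ℂ] F) ∧
      Nonempty ((LinearMap.ker ((B + t • A : E →L[ℂ] F) : E →ₗ[ℂ] F)) ≃ₗ[ℂ] (LinearMap.ker (B : E →ₗ[ℂ] F))) ∧
      (∀ κ : ℕ, finrank ℂ (LinearMap.ker (B : E →ₗ[ℂ] F)) = κ →
        FiniteDimensional ℂ (F ⧸ LinearMap.range (B : E →ₗ[ℂ] F)) →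
          IsClosed ((LinearMap.range ((B + t • A : E →L[ℂ] F) : E →ₗ[ℂ] F) : Submodule ℂ F) : Set F) ∧
          Nonempty ((F ⧸ LinearMap.range ((B + t • A : E →L[ℂ] F) : E →ₗ[ℂ] F)) ≃ₗ[ℂ]
            (F ⧸ LinearMap.range (B : E →ₗ[ℂ] F))) ∧
          finrank ℂ (LinearMap.ker ((B + t • A : E →L[ℂ] F) : E →ₗ[ℂ] F)) = κ ∧
          (finrank ℂ (LinearMap.ker ((B + t • A : E →L[ℂ] F) : E →ₗ[ℂ] F)) : ℤ)
              - (finrank ℂ (F ⧸ LinearMap.range ((B + t • A : E →L[ℂ] F) : E →ₗ[ℂ] F)) : ℤ)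
            = (finrank ℂ (LinearMap.ker (B : E →ₗ[ℂ] F)) : ℤ)
              - (finrank ℂ (F ⧸ LinearMap.range (B : E →ₗ[ℂ] F)) : ℤ)) := by
  intro t
  set K : Submodule ℂ E := LinearMap.ker (B : E →ₗ[ℂ] F) with hKdef
  haveI : CompleteSpace K := (ContinuousLinearMap.isClosed_ker B).completeSpace_coe
  set P := K.orthogonalProjectionOnto with hPdef
  -- B kills K, A kills Kᗮ
  have hBk : ∀ x ∈ K, B x = 0 := fun x hx => hx
  have hPmem : ∀ x : E, (P x : E) ∈ K := fun x => (P x).2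
  have hsub : ∀ x : E, x - (P x : E) ∈ Kᗮ := fun x =>
    Submodule.sub_starProjection_mem_orthogonal x
  -- range equality
  have happly : ∀ x, (B + t • A) x = B x + t • A x := fun x => rfl
  have hrange : LinearMap.range ((B + t • A : E →L[ℂ] F) : E →ₗ[ℂ] F) = LinearMap.range (B : E →ₗ[ℂ] F) := by
    apply le_antisymm
    · rintro y ⟨x, rfl⟩
      rw [ContinuousLinearMap.coe_coe, happly]
      exact (LinearMap.range (B : E →ₗ[ℂ] F)).add_mem ⟨x, rfl⟩
        ((LinearMap.range (B : E →ₗ[ℂ] F)).smul_mem t (hAB ⟨x, rfl⟩))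
    · rintro y ⟨x, rfl⟩
      refine ⟨x - (P x : E), ?_⟩
      rw [ContinuousLinearMap.coe_coe, happly, hA0 _ (hsub x), smul_zero, add_zero, map_sub,
        hBk _ (hPmem x), sub_zero, ContinuousLinearMap.coe_coe]
  -- kernel equivalence
  let φ : (LinearMap.ker ((B + t • A : E →L[ℂ] F) : E →ₗ[ℂ] F)) →ₗ[ℂ] K :=
    (P : E →ₗ[ℂ] K).comp (LinearMap.ker ((B + t • A : E →L[ℂ] F) : E →ₗ[ℂ] F)).subtype
  have hφ : ∀ x : LinearMap.ker ((B + t • A : E →L[ℂ] F) : E →ₗ[ℂ] F), φ x = P (x : E) := fun _ => rfl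
  have hinj : Function.Injective φ := by
    rw [← LinearMap.ker_eq_bot, LinearMap.ker_eq_bot']
    rintro ⟨x, hx⟩ h
    have hP0 : (P x : E) = 0 := by
      have := congrArg (Subtype.val) h
      simpa [hφ] using this
    have hxKo : x ∈ Kᗮ := by
      have := hsub x
      rwa [hP0, sub_zero] at this
    have hAx : A x = 0 := hA0 x hxKo
    have hBx : B x = 0 := by
      have hx' : B x + t • A x = 0 := hx
      rwa [hAx, smul_zero, add_zero] at hx'
    have hxK : x ∈ K := hBx
    have hx0 : x = 0 := by
      have h0 : (inner ℂ x x : ℂ) = 0 := hxKo x hxK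
      exact inner_self_eq_zero.mp h0
    exact Subtype.ext hx0
  have hsurj : Function.Surjective φ := by
    intro k
    obtain ⟨z, hz⟩ := hAB ⟨(k : E), rfl⟩
    set q : E := z - (P z : E) with hqdef
    have hqKo : q ∈ Kᗮ := hsub z
    have hBq : B q = A k := by
      rw [hqdef, map_sub, hBk _ (hPmem z), sub_zero]; exact hz
    have hxker : (k : E) - t • q ∈ LinearMap.ker ((B + t • A : E →L[ℂ] F) : E →ₗ[ℂ] F) := by
      have : (B + t • A) ((k : E) - t • q) = 0 := by
        rw [happly]
        simp [map_sub, map_smul, hBk _ k.2, hBq, hA0 _ hqKo]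
      exact this
    refine ⟨⟨(k : E) - t • q, hxker⟩, ?_⟩
    rw [hφ]
    have : P ((k : E) - t • q) = P (k : E) - t • P q := by
      simp [map_sub, map_smul]
    rw [this, Submodule.orthogonalProjectionOnto_mem_subspace_eq_self k,
      Submodule.orthogonalProjectionOnto_apply_of_mem_orthogonal hqKo,
      smul_zero, sub_zero]
  refine ⟨hrange, ⟨LinearEquiv.ofBijective φ ⟨hinj, hsurj⟩⟩, ?_⟩
  intro κ hκ hF
  -- closedness of range B
  obtain ⟨W, hW⟩ := Submodule.exists_isCompl (LinearMap.range (B : E →ₗ[ℂ] F))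
  haveI : FiniteDimensional ℂ W :=
    (Submodule.quotientEquivOfIsCompl _ _ hW).finiteDimensional
  haveI : CompleteSpace W := FiniteDimensional.complete ℂ W
  haveI : CompleteSpace Kᗮ := K.isClosed_orthogonal.completeSpace_coe
  let ψ : (Kᗮ × W) →L[ℂ] F := (B.comp Kᗮ.subtypeL).coprod W.subtypeL
  have hψ : ∀ p : Kᗮ × W, ψ p = B (p.1 : E) + (p.2 : F) := fun _ => rfl
  have hψker : LinearMap.ker (ψ : (Kᗮ × W) →ₗ[ℂ] F) = ⊥ := by
    rw [LinearMap.ker_eq_bot']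
    rintro ⟨p, w⟩ h
    have h' : B (p : E) + (w : F) = 0 := h
    have hwR : (w : F) ∈ LinearMap.range (B : E →ₗ[ℂ] F) ⊓ W := by
      refine ⟨?_, w.2⟩
      rw [eq_neg_of_add_eq_zero_right h']
      exact Submodule.neg_mem _ ⟨p, rfl⟩
    have hw0 : (w : F) = 0 := by
      rw [hW.inf_eq_bot] at hwR
      simpa using hwR
    have hp0 : (p : E) = 0 := by
      have hBp : B (p : E) = 0 := by rwa [hw0, add_zero] at h'
      have h0 : (inner ℂ (p : E) (p : E) : ℂ) = 0 := p.2 (p : E) hBp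
      exact inner_self_eq_zero.mp h0
    exact Prod.ext (Subtype.ext hp0) (Subtype.ext hw0)
  have hψrange : LinearMap.range (ψ : (Kᗮ × W) →ₗ[ℂ] F) = ⊤ := by
    rw [LinearMap.range_eq_top]
    intro y
    have hy : y ∈ LinearMap.range (B : E →ₗ[ℂ] F) ⊔ W := by rw [hW.sup_eq_top]; trivial
    obtain ⟨r, ⟨x, rfl⟩, w, hwW, rfl⟩ := Submodule.mem_sup.mp hy
    refine ⟨(⟨x - (P x : E), hsub x⟩, ⟨w, hwW⟩), ?_⟩
    rw [ContinuousLinearMap.coe_coe, hψ]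
    simp only [map_sub, hBk _ (hPmem x), sub_zero, ContinuousLinearMap.coe_coe]
  let e := ContinuousLinearEquiv.ofBijective ψ hψker hψrange
  have hRclosed : IsClosed ((LinearMap.range (B : E →ₗ[ℂ] F) : Submodule ℂ F) : Set F) := by
    have himg : ((LinearMap.range (B : E →ₗ[ℂ] F) : Submodule ℂ F) : Set F) =
        e '' (Set.univ ×ˢ ({0} : Set W)) := by
      ext y
      constructor
      · rintro ⟨x, rfl⟩
        refine ⟨(⟨x - (P x : E), hsub x⟩, 0), ⟨trivial, rfl⟩, ?_⟩
        show ψ _ = B x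
        rw [hψ]
        simp only [map_sub, hBk _ (hPmem x), sub_zero, Submodule.coe_zero,
          add_zero]
      · rintro ⟨⟨p, w⟩, ⟨-, hw⟩, rfl⟩
        have hw0 : w = 0 := hw
        show ψ (p, w) ∈ _
        rw [hψ, hw0]
        simp only [Submodule.coe_zero, add_zero]
        exact ⟨(p : E), rfl⟩
    rw [himg]
    exact (e.toHomeomorph.isClosedMap) _ (isClosed_univ.prod isClosed_singleton)
  have hquot : (F ⧸ LinearMap.range ((B + t • A : E →L[ℂ] F) : E →ₗ[ℂ] F)) ≃ₗ[ℂ] (F ⧸ LinearMap.range (B : E →ₗ[ℂ] F)) :=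
    Submodule.quotEquivOfEq _ _ hrange
  have hkfin : finrank ℂ (LinearMap.ker ((B + t • A : E →L[ℂ] F) : E →ₗ[ℂ] F)) = κ := by
    rw [(LinearEquiv.ofBijective φ ⟨hinj, hsurj⟩).finrank_eq, hκ]
  refine ⟨by rw [hrange]; exact hRclosed, ⟨hquot⟩, hkfin, ?_⟩
  rw [hkfin, hκ, hquot.finrank_eq]
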